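/- For the quadratic functional J_A(V_p, W_p) = ½‖U − V_p W_pᵀ‖_A² with U the solution of 𝒜(U) = B, the gradient of J_A with respect to V_p equals (𝒜(V_p W_pᵀ) − B) W_p, and the gradient with respect to W_p equals (𝒜(V_p W_pᵀ) − B)ᵀ V_p. -/

import Mathlib

open Matrix Kronecker

/-- The trace pairing `⟨X, Y⟩ = tr(Xᵀ Y)`. -/
def traceIP {a b : ℕ} (X Y : Matrix (Fin a) (Fin b) ℝ) : ℝ :=
  Matrix.trace (Xᵀ * Y)

/-- The linear operator `𝒜(X) = Σ_{i=0}^m K_i X G_iᵀ`. -/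
def opA {n1 n2 m : ℕ} (K : Fin (m + 1) → Matrix (Fin n1) (Fin n1) ℝ)
    (G : Fin (m + 1) → Matrix (Fin n2) (Fin n2) ℝ)
    (X : Matrix (Fin n1) (Fin n2) ℝ) : Matrix (Fin n1) (Fin n2) ℝ :=
  ∑ i, K i * X * (G i)ᵀ

/-- The objective `J_A(V, W) = ½ ‖U − V Wᵀ‖_A²`. -/
noncomputable def JA {n1 n2 m p : ℕ} (K : Fin (m + 1) → Matrix (Fin n1) (Fin n1) ℝ)
    (G : Fin (m + 1) → Matrix (Fin n2) (Fin n2) ℝ)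
    (U : Matrix (Fin n1) (Fin n2) ℝ)
    (V : Matrix (Fin n1) (Fin p) ℝ) (W : Matrix (Fin n2) (Fin p) ℝ) : ℝ :=
  (1 / 2) * traceIP (opA K G (U - V * Wᵀ)) (U - V * Wᵀ)

section Aux
variable {n1 n2 m p : ℕ}

lemma opA_sub (K : Fin (m + 1) → Matrix (Fin n1) (Fin n1) ℝ)
    (G : Fin (m + 1) → Matrix (Fin n2) (Fin n2) ℝ) (X Y : Matrix (Fin n1) (Fin n2) ℝ) :
    opA K G (X - Y) = opA K G X - opA K G Y := by
  simp [opA, Matrix.sub_mul, Matrix.mul_sub, Finset.sum_sub_distrib]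

lemma opA_smul (K : Fin (m + 1) → Matrix (Fin n1) (Fin n1) ℝ)
    (G : Fin (m + 1) → Matrix (Fin n2) (Fin n2) ℝ) (t : ℝ) (X : Matrix (Fin n1) (Fin n2) ℝ) :
    opA K G (t • X) = t • opA K G X := by
  simp [opA, Matrix.smul_mul, Matrix.mul_smul, Finset.smul_sum]

lemma traceIP_sub_left {a b : ℕ} (X Y Z : Matrix (Fin a) (Fin b) ℝ) :
    traceIP (X - Y) Z = traceIP X Z - traceIP Y Z := by
  simp [traceIP, Matrix.sub_mul]

lemma traceIP_sub_right {a b : ℕ} (X Y Z : Matrix (Fin a) (Fin b) ℝ) :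
    traceIP X (Y - Z) = traceIP X Y - traceIP X Z := by
  simp [traceIP, Matrix.mul_sub]

lemma traceIP_smul_left {a b : ℕ} (t : ℝ) (X Y : Matrix (Fin a) (Fin b) ℝ) :
    traceIP (t • X) Y = t * traceIP X Y := by
  simp [traceIP, Matrix.smul_mul]

lemma traceIP_smul_right {a b : ℕ} (t : ℝ) (X Y : Matrix (Fin a) (Fin b) ℝ) :
    traceIP X (t • Y) = t * traceIP X Y := by
  simp [traceIP, Matrix.mul_smul]

lemma traceIP_selfadj (K : Fin (m + 1) → Matrix (Fin n1) (Fin n1) ℝ)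
    (G : Fin (m + 1) → Matrix (Fin n2) (Fin n2) ℝ)
    (hK : ∀ i, (K i)ᵀ = K i) (hG : ∀ i, (G i)ᵀ = G i)
    (X Y : Matrix (Fin n1) (Fin n2) ℝ) :
    traceIP (opA K G X) Y = traceIP (opA K G Y) X := by
  rw [traceIP, traceIP, opA, opA, Matrix.transpose_sum, Matrix.transpose_sum,
    Matrix.sum_mul, Matrix.sum_mul, trace_sum, trace_sum]
  refine Finset.sum_congr rfl fun i _ => ?_
  simp only [transpose_mul, transpose_transpose, hK, hG, ← Matrix.mul_assoc]
  calc trace (G i * Xᵀ * K i * Y) = trace ((G i * Xᵀ * K i * Y)ᵀ) := (trace_transpose _).symm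
    _ = trace (Yᵀ * K i * X * G i) := by simp [transpose_mul, hK, hG, Matrix.mul_assoc]
    _ = trace (G i * (Yᵀ * K i * X)) := (trace_mul_comm _ _)
    _ = trace (G i * Yᵀ * K i * X) := by simp [Matrix.mul_assoc]

lemma traceIP_line (K : Fin (m + 1) → Matrix (Fin n1) (Fin n1) ℝ)
    (G : Fin (m + 1) → Matrix (Fin n2) (Fin n2) ℝ)
    (hK : ∀ i, (K i)ᵀ = K i) (hG : ∀ i, (G i)ᵀ = G i)
    (E D : Matrix (Fin n1) (Fin n2) ℝ) (t : ℝ) :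
    traceIP (opA K G (E - t • D)) (E - t • D)
      = traceIP (opA K G E) E - t * (2 * traceIP (opA K G E) D)
        + t ^ 2 * traceIP (opA K G D) D := by
  rw [opA_sub, opA_smul, traceIP_sub_left, traceIP_sub_right, traceIP_sub_right,
    traceIP_smul_left, traceIP_smul_left, traceIP_smul_right, traceIP_smul_right,
    traceIP_selfadj K G hK hG D E]
  ring

lemma traceIP_shift_right {a b c : ℕ} (X : Matrix (Fin a) (Fin b) ℝ)
    (H : Matrix (Fin a) (Fin c) ℝ) (W : Matrix (Fin b) (Fin c) ℝ) :
    traceIP X (H * Wᵀ) = traceIP (X * W) H := by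
  rw [traceIP, traceIP, transpose_mul, ← Matrix.mul_assoc]
  exact trace_mul_cycle Xᵀ H Wᵀ

lemma traceIP_shift_left {a b c : ℕ} (S : Matrix (Fin a) (Fin b) ℝ)
    (V : Matrix (Fin a) (Fin c) ℝ) (H : Matrix (Fin b) (Fin c) ℝ) :
    traceIP S (V * Hᵀ) = traceIP (Sᵀ * V) H := by
  rw [traceIP, traceIP, transpose_mul, transpose_transpose, ← Matrix.mul_assoc,
    ← trace_transpose (Sᵀ * V * Hᵀ), trace_mul_cycle Vᵀ S H]
  simp [transpose_mul, Matrix.mul_assoc]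

lemma hasDerivAt_quad (a b c : ℝ) :
    HasDerivAt (fun t : ℝ => a + t * b + t ^ 2 * c) b 0 := by
  have h := ((((hasDerivAt_id (0:ℝ)).mul_const b).const_add a).add
    ((hasDerivAt_pow 2 (0:ℝ)).mul_const c))
  simpa [Pi.add_def] using h

end Aux


/-- The gradient of `J_A` with respect to `V_p` is `(𝒜(V_p W_pᵀ) − B) W_p` and
with respect to `W_p` is `(𝒜(V_p W_pᵀ) − B)ᵀ V_p`, expressed via directional
derivatives against the trace inner product. -/
theorem JA_gradients {n1 n2 m p : ℕ}
    (K : Fin (m + 1) → Matrix (Fin n1) (Fin n1) ℝ)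
    (G : Fin (m + 1) → Matrix (Fin n2) (Fin n2) ℝ)
    (hK : ∀ i, (K i)ᵀ = K i) (hG : ∀ i, (G i)ᵀ = G i)
    (hA : (∑ i, (G i) ⊗ₖ (K i)).PosDef)
    (U B : Matrix (Fin n1) (Fin n2) ℝ) (hU : opA K G U = B)
    (V : Matrix (Fin n1) (Fin p) ℝ) (W : Matrix (Fin n2) (Fin p) ℝ) :
    (∀ H : Matrix (Fin n1) (Fin p) ℝ,
      HasDerivAt (fun t : ℝ => JA K G U (V + t • H) W)
        (traceIP ((opA K G (V * Wᵀ) - B) * W) H) 0) ∧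
    (∀ H : Matrix (Fin n2) (Fin p) ℝ,
      HasDerivAt (fun t : ℝ => JA K G U V (W + t • H))
        (traceIP ((opA K G (V * Wᵀ) - B)ᵀ * V) H) 0) := by
  have hE : opA K G (U - V * Wᵀ) = B - opA K G (V * Wᵀ) := by
    rw [opA_sub, hU]
  constructor
  · intro H
    set E := U - V * Wᵀ with hEdef
    set D := H * Wᵀ with hDdef
    have hfun : (fun t : ℝ => JA K G U (V + t • H) W)
        = fun t : ℝ => (1/2) * traceIP (opA K G E) E
          + t * (-(traceIP (opA K G E) D)) + t ^ 2 * ((1/2) * traceIP (opA K G D) D) := by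
      funext t
      have hl : U - (V + t • H) * Wᵀ = E - t • D := by
        rw [hEdef, hDdef, Matrix.add_mul, Matrix.smul_mul]
        abel
      rw [JA, hl, traceIP_line K G hK hG E D t]
      ring
    have hval : traceIP ((opA K G (V * Wᵀ) - B) * W) H = -(traceIP (opA K G E) D) := by
      rw [← traceIP_shift_right, hE, hDdef, traceIP_sub_left, traceIP_sub_left]
      ring
    rw [hfun, hval]
    exact hasDerivAt_quad _ _ _
  · intro H
    set E := U - V * Wᵀ with hEdef
    set D := V * Hᵀ with hDdef
    have hfun : (fun t : ℝ => JA K G U V (W + t • H))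
        = fun t : ℝ => (1/2) * traceIP (opA K G E) E
          + t * (-(traceIP (opA K G E) D)) + t ^ 2 * ((1/2) * traceIP (opA K G D) D) := by
      funext t
      have hl : U - V * (W + t • H)ᵀ = E - t • D := by
        rw [hEdef, hDdef, transpose_add, transpose_smul, Matrix.mul_add, Matrix.mul_smul]
        abel
      rw [JA, hl, traceIP_line K G hK hG E D t]
      ring
    have hval : traceIP ((opA K G (V * Wᵀ) - B)ᵀ * V) H = -(traceIP (opA K G E) D) := by
      rw [← traceIP_shift_left, hE, hDdef, traceIP_sub_left, traceIP_sub_left]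
      ring
    rw [hfun, hval]
    exact hasDerivAt_quad _ _ _
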